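/- Let θ ∈ ℂ and let y, z : ℂ → ℂ be holomorphic. Define, for μ ∈ ℂ∖{0} and t ∈ ℂ, A(μ,t) = μ·[[0,1],[0,0]] + [[−y, −(z+2y²+t)],[1/2, y]] + (1/(2μ))·[[θ,0],[z,−θ]] and U(μ,t) = −(μ·[[0,1],[0,0]] + [[−y,0],[1/2,y]]). Then the zero-curvature equation ∂A/∂t − ∂U/∂μ + A·U − U·A = 0 holds for all μ ∈ ℂ∖{0} and t ∈ ℂ if and only if y′ = y² + z + t/2 and z′ = −2z·y − θ hold for all t ∈ ℂ. -/

import Mathlib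

open Matrix Complex

noncomputable section

/-- The `μ`-coefficient matrix of the Harnad–Tracy–Widom pair `HTW` with parameter `θ`. -/
def A₈ (θ : ℂ) (y z : ℂ → ℂ) (μ t : ℂ) : Matrix (Fin 2) (Fin 2) ℂ :=
  μ • (!![0,1; 0,0] : Matrix (Fin 2) (Fin 2) ℂ) +
    !![-y t, -(z t + 2*(y t)^2 + t); 1/2, y t] +
    (1/(2*μ)) • !![θ, 0; z t, -θ]

/-- The `t`-coefficient matrix of the Harnad–Tracy–Widom pair `HTW`. -/
def U₈ (y : ℂ → ℂ) (μ t : ℂ) : Matrix (Fin 2) (Fin 2) ℂ :=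
  -(μ • (!![0,1; 0,0] : Matrix (Fin 2) (Fin 2) ℂ) + !![-y t, 0; 1/2, y t])

set_option maxHeartbeats 1000000 in
/-- The zero-curvature equation for the Harnad–Tracy–Widom pair holds for all
`μ ≠ 0` and all `t` iff `y' = y² + z + t/2` and `z' = −2zy − θ`. -/
theorem stmt_8 (θ : ℂ) (y z : ℂ → ℂ)
    (hy : Differentiable ℂ y) (hz : Differentiable ℂ z) :
    (∀ μ : ℂ, μ ≠ 0 → ∀ t : ℂ,
      (Matrix.of fun i j => deriv (fun s => A₈ θ y z μ s i j) t)
        - (Matrix.of fun i j => deriv (fun m => U₈ y m t i j) μ)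
        + A₈ θ y z μ t * U₈ y μ t - U₈ y μ t * A₈ θ y z μ t = 0)
    ↔ (∀ t : ℂ, deriv y t = (y t)^2 + z t + t/2 ∧
        deriv z t = -2*(z t)*(y t) - θ) := by
  have dA00 : ∀ μ t : ℂ, deriv (fun s => A₈ θ y z μ s 0 0) t = -deriv y t := by
    intro μ t
    have e : (fun s => A₈ θ y z μ s 0 0) = fun s => -y s + 1/(2*μ)*θ := by
      funext s; simp [A₈]
    rw [e]; exact (((hy t).hasDerivAt.neg).add_const _).deriv
  have dA01 : ∀ μ t : ℂ, deriv (fun s => A₈ θ y z μ s 0 1) t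
      = -(deriv z t + 4*y t*deriv y t + 1) := by
    intro μ t
    have e : (fun s => A₈ θ y z μ s 0 1) = fun s => μ + -(z s + 2*(y s)^2 + s) := by
      funext s; simp [A₈]
    rw [e]
    have h1 : HasDerivAt (fun s => z s + 2*(y s)^2 + s)
        (deriv z t + 4*y t*deriv y t + 1) t := by
      have := ((hz t).hasDerivAt.add
        ((((hy t).hasDerivAt.pow 2)).const_mul 2)).add (hasDerivAt_id t)
      exact this.congr_deriv (by norm_num; ring)
    have := (h1.neg).const_add μ
    simpa using this.deriv
  have dA10 : ∀ μ t : ℂ, deriv (fun s => A₈ θ y z μ s 1 0) t = 1/(2*μ)*deriv z t := by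
    intro μ t
    have e : (fun s => A₈ θ y z μ s 1 0) = fun s => 1/2 + 1/(2*μ)*z s := by
      funext s; simp [A₈]
    rw [e]
    simpa using (((hz t).hasDerivAt.const_mul (1/(2*μ))).const_add (1/2 : ℂ)).deriv
  have dA11 : ∀ μ t : ℂ, deriv (fun s => A₈ θ y z μ s 1 1) t = deriv y t := by
    intro μ t
    have e : (fun s => A₈ θ y z μ s 1 1) = fun s => y s + 1/(2*μ)*(-θ) := by
      funext s; simp [A₈]
    rw [e]; simpa using ((hy t).hasDerivAt.add_const _).deriv
  have dU00 : ∀ μ t : ℂ, deriv (fun m => U₈ y m t 0 0) μ = 0 := by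
    intro μ t
    have e : (fun m => U₈ y m t 0 0) = fun _ => y t := by funext m; simp [U₈]
    rw [e]; simp
  have dU01 : ∀ μ t : ℂ, deriv (fun m => U₈ y m t 0 1) μ = -1 := by
    intro μ t
    have e : (fun m => U₈ y m t 0 1) = fun m => -m := by funext m; simp [U₈]
    rw [e]; simp
  have dU10 : ∀ μ t : ℂ, deriv (fun m => U₈ y m t 1 0) μ = 0 := by
    intro μ t
    have e : (fun m => U₈ y m t 1 0) = fun _ => -(1/2 : ℂ) := by funext m; simp [U₈]
    rw [e]; simp
  have dU11 : ∀ μ t : ℂ, deriv (fun m => U₈ y m t 1 1) μ = 0 := by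
    intro μ t
    have e : (fun m => U₈ y m t 1 1) = fun _ => -y t := by funext m; simp [U₈]
    rw [e]; simp
  have ext2 : ∀ (M : Matrix (Fin 2) (Fin 2) ℂ), M 0 0 = 0 → M 0 1 = 0 →
      M 1 0 = 0 → M 1 1 = 0 → M = 0 := by
    intro M h00 h01 h10 h11
    ext i j
    fin_cases i <;> fin_cases j <;> assumption
  constructor
  · intro h t
    have h1 := h 1 one_ne_zero t
    have h00 := congrFun (congrFun h1 0) 0
    have h10 := congrFun (congrFun h1 1) 0
    simp only [Matrix.sub_apply, Matrix.add_apply, Matrix.mul_apply, Fin.sum_univ_two,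
      Matrix.of_apply, dA00, dA10, dU00, dU10, Matrix.zero_apply] at h00 h10
    simp [A₈, U₈, Fin.sum_univ_two] at h00 h10
    constructor
    · linear_combination -h00
    · linear_combination 2 * h10
  · intro h μ hμ t
    obtain ⟨h1, h2⟩ := h t
    have hinv : μ⁻¹ * μ = 1 := inv_mul_cancel₀ hμ
    refine ext2 _ ?_ ?_ ?_ ?_ <;>
      simp only [Matrix.sub_apply, Matrix.add_apply, Matrix.mul_apply, Fin.sum_univ_two,
        Matrix.of_apply, dA00, dA01, dA10, dA11, dU00, dU01, dU10, dU11,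
        Matrix.zero_apply] <;>
      simp only [h1, h2] <;>
      simp [A₈, U₈, Fin.sum_univ_two] <;>
      first
        | linear_combination (0 : ℂ) * hinv
        | linear_combination (z t / 2) * hinv
        | linear_combination (-θ) * hinv
        | linear_combination (-(z t) / 2) * hinv
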